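/- The traffic map T preserves the density of ones: for every x ∈ {0,1}^ℤ, ρ₋(Tx,1) = ρ₋(x,1) and ρ₊(Tx,1) = ρ₊(x,1). -/

import Mathlib

open Filter Topology

/-- The traffic map T: (Tx)ᵢ = xᵢ + min(xᵢ₋₁, 1-xᵢ) - min(xᵢ, 1-xᵢ₊₁)
(simultaneous substitution 10 → 01). -/
def T (x : ℤ → ℕ) : ℤ → ℕ :=
  fun i => x i + min (x (i - 1)) (1 - x i) - min (x i) (1 - x (i + 1))

/-- Average of ones in the window x[-n, m]. -/
noncomputable def winAvg (x : ℤ → ℕ) (p : ℕ × ℕ) : ℝ :=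
  (∑ i ∈ Finset.Icc (-(p.1 : ℤ)) (p.2 : ℤ), (x i : ℝ)) / (p.1 + p.2 + 1)

/-- Lower density ρ₋(x,1). -/
noncomputable def rhoMinus (x : ℤ → ℕ) : ℝ :=
  Filter.liminf (winAvg x) (Filter.atTop ×ˢ Filter.atTop)

/-- Upper density ρ₊(x,1). -/
noncomputable def rhoPlus (x : ℤ → ℕ) : ℝ :=
  Filter.limsup (winAvg x) (Filter.atTop ×ˢ Filter.atTop)

lemma limsup_liminf_eq_of_tendsto_sub {ι : Type*} {l : Filter ι} [l.NeBot]
    {f g : ι → ℝ} (hb1 : IsBoundedUnder (· ≤ ·) l g) (hb2 : IsBoundedUnder (· ≥ ·) l g)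
    (h : Tendsto (fun i => f i - g i) l (𝓝 0)) :
    limsup f l = limsup g l ∧ liminf f l = liminf g l := by
  set d : ι → ℝ := fun i => f i - g i with hd
  have hfd : f = g + d := by funext i; simp [hd]
  have hdub : IsBoundedUnder (· ≤ ·) l d := h.isBoundedUnder_le
  have hdlb : IsBoundedUnder (· ≥ ·) l d := h.isBoundedUnder_ge
  have hdsup : limsup d l = 0 := h.limsup_eq
  have hdinf : liminf d l = 0 := h.liminf_eq
  constructor
  · rw [hfd]
    refine le_antisymm ?_ ?_
    · have := limsup_add_le (u := g) (v := d) hb2 hb1 hdlb.isCoboundedUnder_le hdub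
      rwa [hdsup, add_zero] at this
    · have := le_limsup_add (u := g) (v := d) hb1 hb2.isCoboundedUnder_le hdub hdlb
      rwa [hdinf, add_zero] at this
  · rw [hfd]
    refine le_antisymm ?_ ?_
    · have hn : Tendsto (-d) l (𝓝 0) := by have := h.neg; rw [neg_zero] at this; exact this
      have h2 := le_liminf_add (u := g + d) (v := -d)
        (isBoundedUnder_ge_add hb2 hdlb) (isBoundedUnder_le_add hb1 hdub)
        hn.isBoundedUnder_ge hn.isBoundedUnder_le.isCoboundedUnder_ge
      have hninf : liminf (-d) l = 0 := hn.liminf_eq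
      have hgd : (g + d) + -d = g := by funext i; simp
      rw [hninf, add_zero, hgd] at h2
      exact h2
    · have := le_liminf_add (u := g) (v := d) hb2 hb1 hdlb hdub.isCoboundedUnder_ge
      rwa [hdinf, add_zero] at this

lemma telescope_Icc (g : ℤ → ℝ) (l u : ℤ) (h : l ≤ u) :
    ∑ i ∈ Finset.Icc l u, (g i - g (i+1)) = g l - g (u+1) := by
  refine Int.le_induction
    (motive := fun u _ => ∑ i ∈ Finset.Icc l u, (g i - g (i+1)) = g l - g (u+1)) ?_ ?_ u h
  · simp
  · intro u hu ih
    have hins : Finset.Icc l (u+1) = insert (u+1) (Finset.Icc l u) := by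
      ext j; simp; omega
    rw [hins, Finset.sum_insert (by simp), ih]
    ring

set_option maxHeartbeats 2000000 in
/-- The traffic map preserves the lower and upper densities of ones. -/
theorem T_preserves_density (x : ℤ → ℕ) (hx : ∀ i, x i ≤ 1) :
    rhoMinus (T x) = rhoMinus x ∧ rhoPlus (T x) = rhoPlus x := by
  set a : ℤ → ℕ := fun i => min (x (i - 1)) (1 - x i) with ha
  have ha1 : ∀ i, a i ≤ 1 := fun i => le_trans (min_le_left _ _) (hx _)
  -- cast form of T
  have hTa : ∀ i, ((T x i : ℝ)) = (x i : ℝ) + a i - a (i+1) := by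
    intro i
    have hb : a (i+1) = min (x i) (1 - x (i+1)) := by
      simp only [ha, add_sub_cancel_right]
    have hle : a (i+1) ≤ x i + a i := by
      rw [hb]; exact le_trans (min_le_left _ _) (Nat.le_add_right _ _)
    have hT : T x i = x i + a i - a (i+1) := by
      simp only [T, ha, hb, add_sub_cancel_right]
    rw [hT, Nat.cast_sub hle]
    push_cast
    ring
  -- window average identity
  have hwin : ∀ p : ℕ × ℕ, winAvg (T x) p - winAvg x p =
      ((a (-(p.1 : ℤ)) : ℝ) - a ((p.2 : ℤ) + 1)) / (p.1 + p.2 + 1) := by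
    intro p
    have hle : (-(p.1 : ℤ)) ≤ (p.2 : ℤ) := by omega
    have hsum : ∑ i ∈ Finset.Icc (-(p.1 : ℤ)) (p.2 : ℤ), ((T x i : ℝ))
        = ∑ i ∈ Finset.Icc (-(p.1 : ℤ)) (p.2 : ℤ), (x i : ℝ)
          + ((a (-(p.1 : ℤ)) : ℝ) - a ((p.2 : ℤ) + 1)) := by
      have : ∀ i ∈ Finset.Icc (-(p.1 : ℤ)) (p.2 : ℤ),
          ((T x i : ℝ)) = (x i : ℝ) + ((a i : ℝ) - a (i+1)) := by
        intro i _; rw [hTa i]; ring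
      rw [Finset.sum_congr rfl this, Finset.sum_add_distrib,
        telescope_Icc (fun i => (a i : ℝ)) _ _ hle]
    simp only [winAvg]
    rw [hsum, ← sub_div, add_sub_cancel_left]
  -- the perturbation tends to zero
  have hden : Tendsto (fun p : ℕ × ℕ => 1 / ((p.1 : ℝ) + p.2 + 1))
      (atTop ×ˢ atTop) (𝓝 0) := by
    have h2 : Tendsto (fun p : ℕ × ℕ => p.1 + p.2) (atTop ×ˢ atTop) atTop :=
      Tendsto.atTop_add_atTop (tendsto_fst.comp tendsto_id) tendsto_snd
    have h1 : Tendsto (fun p : ℕ × ℕ => p.1 + p.2 + 1) (atTop ×ˢ atTop) atTop :=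
      tendsto_atTop_mono (fun p => Nat.le_succ _) h2
    have h3 := (tendsto_one_div_atTop_nhds_zero_nat (𝕜 := ℝ)).comp h1
    apply h3.congr
    intro p
    simp only [Function.comp]
    push_cast
    ring
  have htend : Tendsto (fun p : ℕ × ℕ => winAvg (T x) p - winAvg x p)
      (atTop ×ˢ atTop) (𝓝 0) := by
    apply squeeze_zero_norm _ hden
    intro p
    rw [hwin p]
    have hpos : (0:ℝ) < (p.1 : ℝ) + p.2 + 1 := by positivity
    rw [div_eq_mul_inv, norm_mul, norm_inv, Real.norm_eq_abs (((p.1:ℝ) + p.2 + 1)),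
      abs_of_pos hpos, one_div]
    have hnum : ‖((a (-(p.1 : ℤ)) : ℝ) - a ((p.2 : ℤ) + 1))‖ ≤ 1 := by
      rw [Real.norm_eq_abs, abs_sub_le_iff]
      constructor
      · have := ha1 (-(p.1 : ℤ)); have h2 : (0:ℝ) ≤ (a ((p.2 : ℤ) + 1) : ℝ) := Nat.cast_nonneg _
        have h3 : (a (-(p.1 : ℤ)) : ℝ) ≤ 1 := by exact_mod_cast this
        linarith
      · have := ha1 ((p.2 : ℤ) + 1); have h2 : (0:ℝ) ≤ (a (-(p.1 : ℤ)) : ℝ) := Nat.cast_nonneg _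
        have h3 : (a ((p.2 : ℤ) + 1) : ℝ) ≤ 1 := by exact_mod_cast this
        linarith
    calc ‖((a (-(p.1 : ℤ)) : ℝ) - a ((p.2 : ℤ) + 1))‖ * ((p.1:ℝ) + p.2 + 1)⁻¹
        ≤ 1 * ((p.1:ℝ) + p.2 + 1)⁻¹ := by
          apply mul_le_mul_of_nonneg_right hnum (by positivity)
      _ = ((p.1:ℝ) + p.2 + 1)⁻¹ := one_mul _
  -- boundedness of winAvg x
  have hb1 : IsBoundedUnder (· ≤ ·) (atTop ×ˢ atTop : Filter (ℕ × ℕ)) (winAvg x) := by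
    refine isBoundedUnder_of ⟨1, fun p => ?_⟩
    simp only [winAvg]
    rw [div_le_one (by positivity)]
    calc ∑ i ∈ Finset.Icc (-(p.1 : ℤ)) (p.2 : ℤ), (x i : ℝ)
        ≤ ∑ i ∈ Finset.Icc (-(p.1 : ℤ)) (p.2 : ℤ), (1:ℝ) := by
          apply Finset.sum_le_sum; intro i _; exact_mod_cast hx i
      _ = ((Finset.Icc (-(p.1 : ℤ)) (p.2 : ℤ)).card : ℝ) := by simp
      _ = (p.1 : ℝ) + p.2 + 1 := by
          rw [Int.card_Icc]
          have h : ((p.2 : ℤ) + 1 - (-(p.1 : ℤ))).toNat = p.1 + p.2 + 1 := by omega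
          rw [h]; push_cast; ring
  have hb2 : IsBoundedUnder (· ≥ ·) (atTop ×ˢ atTop : Filter (ℕ × ℕ)) (winAvg x) := by
    refine isBoundedUnder_of ⟨0, fun p => ?_⟩
    simp only [ge_iff_le, winAvg]
    exact div_nonneg (Finset.sum_nonneg fun i _ => Nat.cast_nonneg _) (by positivity)
  obtain ⟨hsup, hinf⟩ := limsup_liminf_eq_of_tendsto_sub hb1 hb2 htend
  exact ⟨hinf, hsup⟩
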